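/- Let V be a symplectic vector space with an s-good grading over a field of characteristic 2, B ∈ Sp(V) a symplectic automorphism, and Q ∈ Q(V)_2^0 such that Q(Bx) = Q(x) for all x ∈ V. Then B preserves the filtration: B(V_{≥i}) = V_{≥i} for all i. -/

import Mathlib

/-- An `s`-good grading of a symplectic vector space `(V, B)`. -/
def SGood (k V : Type*) [Field k] [AddCommGroup V] [Module k V]
    (B : LinearMap.BilinForm k V) (Vg : ℤ → Submodule k V) : Prop :=
  DirectSum.IsInternal Vg ∧
  (∀ i : ℤ, 0 ≤ i →
    Module.finrank k (Vg (-i)) = Module.finrank k (Vg i) ∧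
    Module.finrank k (Vg (-i - 2)) ≤ Module.finrank k (Vg (-i))) ∧
  (∀ i : ℤ, Even i → Even (Module.finrank k (Vg i))) ∧
  (∀ i j : ℤ, i + j ≠ 0 → ∀ x ∈ Vg i, ∀ y ∈ Vg j, B x y = 0)

/-- `Q ∈ Q(V)₂⁰`: `A = A_Q` shifts the grading by `2`, `Q` vanishes on `V_i` for
`i ≠ -1`, `A^n : V_{-n} → V_n` is bijective for even `n ≥ 0`, and for odd `n ≥ 1`
the map `A^{(n-1)/2} : V_{-n} → V_{-1}` is injective with `Q` nondegenerate on its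
image (no nonzero vector of the image lies in the radical of the polar form of
`Q|_image` and has `Q`-value `0`). -/
def QV20 (k V : Type*) [Field k] [AddCommGroup V] [Module k V]
    (Vg : ℤ → Submodule k V) (Q : QuadraticForm k V) (A : Module.End k V) : Prop :=
  (∀ i : ℤ, ∀ x ∈ Vg i, A x ∈ Vg (i + 2)) ∧
  (∀ i : ℤ, i ≠ -1 → ∀ x ∈ Vg i, Q x = 0) ∧
  (∀ n : ℕ, Even n →
    (∀ x ∈ Vg (-(n : ℤ)), (A ^ n) x = 0 → x = 0) ∧
    (∀ y ∈ Vg (n : ℤ), ∃ x ∈ Vg (-(n : ℤ)), (A ^ n) x = y)) ∧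
  (∀ n : ℕ, Odd n →
    (∀ x ∈ Vg (-(n : ℤ)), (A ^ ((n - 1) / 2)) x = 0 → x = 0) ∧
    (∀ w ∈ ⇑(A ^ ((n - 1) / 2)) '' (Vg (-(n : ℤ)) : Set V),
      (∀ w' ∈ ⇑(A ^ ((n - 1) / 2)) '' (Vg (-(n : ℤ)) : Set V),
        QuadraticMap.polar Q w w' = 0) → Q w = 0 → w = 0))


namespace SFQPF

variable {k V : Type*} [Field k] [AddCommGroup V] [Module k V]

/-- The decreasing filtration associated to a `ℤ`-grading. -/
def Filt (Vg : ℤ → Submodule k V) (i : ℤ) : Submodule k V := ⨆ j ≥ i, Vg j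

variable {B : LinearMap.BilinForm k V} {Vg : ℤ → Submodule k V}
variable {Q : QuadraticForm k V} {A : Module.End k V}

theorem le_Filt {j i : ℤ} (h : i ≤ j) : Vg j ≤ Filt Vg i :=
  le_iSup₂ (f := fun j (_ : j ≥ i) => Vg j) j h

theorem Filt_mono {i i' : ℤ} (h : i ≤ i') : Filt Vg i' ≤ Filt Vg i :=
  iSup₂_le fun _ hj => le_Filt (le_trans h hj)

theorem Filt_split (i : ℤ) : Filt Vg i = Vg i ⊔ Filt Vg (i + 1) := by
  apply le_antisymm
  · refine iSup₂_le fun j hj => ?_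
    rcases eq_or_lt_of_le hj with h | h
    · exact h ▸ le_sup_left
    · exact le_trans (le_Filt (by omega)) le_sup_right
  · exact sup_le (le_Filt le_rfl) (Filt_mono (by omega))

theorem Filt_mem_split {i : ℤ} {x : V} (hx : x ∈ Filt Vg i) :
    ∃ v ∈ Vg i, ∃ y ∈ Filt Vg (i + 1), x = v + y := by
  rw [Filt_split i] at hx
  obtain ⟨v, hv, y, hy, h⟩ := Submodule.mem_sup.mp hx
  exact ⟨v, hv, y, hy, h.symm⟩

theorem Filt_induction (i : ℤ) (C : V → Prop) (h0 : C 0)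
    (hadd : ∀ x y, C x → C y → C (x + y))
    (hmem : ∀ j, i ≤ j → ∀ x ∈ Vg j, C x) :
    ∀ x ∈ Filt Vg i, C x := by
  intro x hx
  refine Submodule.iSup_induction (fun j => ⨆ _ : j ≥ i, Vg j) (motive := C) hx ?_ h0 hadd
  intro j y hy
  by_cases hj : j ≥ i
  · simp only [iSup_pos hj] at hy
    exact hmem j hj y hy
  · simp only [iSup_neg hj, Submodule.mem_bot] at hy
    exact hy ▸ h0

/-- Orthogonality of filtration pieces whose indices sum to something positive. -/
theorem Filt_orth (horth : ∀ i j : ℤ, i + j ≠ 0 → ∀ x ∈ Vg i, ∀ y ∈ Vg j, B x y = 0)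
    {a b : ℤ} (hab : 0 < a + b) :
    ∀ x ∈ Filt Vg a, ∀ y ∈ Filt Vg b, B x y = 0 := by
  refine Filt_induction a (fun x => ∀ y ∈ Filt Vg b, B x y = 0) ?_ ?_ ?_
  · intro y _; simp
  · intro u v hu hv y hy
    rw [map_add, LinearMap.add_apply, hu y hy, hv y hy, add_zero]
  · intro j hj u hu
    refine Filt_induction b (fun y => B u y = 0) ?_ ?_ ?_
    · simp
    · intro y z h1 h2; rw [map_add, h1, h2, add_zero]
    · intro j' hj' y hy
      exact horth j j' (by omega) u hu y hy

theorem Apow_Vg (hA2 : ∀ i : ℤ, ∀ x ∈ Vg i, A x ∈ Vg (i + 2)) (m : ℕ) (p : ℤ) :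
    ∀ x ∈ Vg p, (A ^ m) x ∈ Vg (p + 2 * m) := by
  induction m generalizing p with
  | zero => intro x hx; simpa using hx
  | succ m ih =>
    intro x hx
    have h1 : (A ^ (m + 1)) x = (A ^ m) (A x) := by
      rw [pow_succ, Module.End.mul_apply]
    have e : p + 2 * ((m + 1 : ℕ) : ℤ) = p + 2 + 2 * (m : ℕ) := by push_cast; ring
    rw [h1, e]
    exact ih (p + 2) (A x) (hA2 p x hx)

theorem Apow_Filt (hA2 : ∀ i : ℤ, ∀ x ∈ Vg i, A x ∈ Vg (i + 2)) (m : ℕ) (i : ℤ) :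
    ∀ x ∈ Filt Vg i, (A ^ m) x ∈ Filt Vg (i + 2 * m) := by
  refine Filt_induction i (fun x => (A ^ m) x ∈ Filt Vg (i + 2 * m)) ?_ ?_ ?_
  · simp
  · intro u v hu hv; rw [map_add]; exact add_mem hu hv
  · intro j hj u hu
    exact le_Filt (by omega) (Apow_Vg hA2 m j u hu)

/-- `Q` vanishes on the nonnegative part of the filtration. -/
theorem Q_Filt_zero (horth : ∀ i j : ℤ, i + j ≠ 0 → ∀ x ∈ Vg i, ∀ y ∈ Vg j, B x y = 0)
    (hA2 : ∀ i : ℤ, ∀ x ∈ Vg i, A x ∈ Vg (i + 2))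
    (hQvan : ∀ i : ℤ, i ≠ -1 → ∀ x ∈ Vg i, Q x = 0)
    (hA : ∀ x y : V, Q (x + y) - Q x - Q y = B (A x) y) :
    ∀ x ∈ Filt Vg 0, Q x = 0 := by
  have main : ∀ x ∈ Filt Vg 0, Q x = 0 ∧ x ∈ Filt Vg 0 := by
    refine Filt_induction 0 (fun x => Q x = 0 ∧ x ∈ Filt Vg 0) ?_ ?_ ?_
    · exact ⟨by simp, zero_mem _⟩
    · rintro u v ⟨hu, hu'⟩ ⟨hv, hv'⟩
      have hAu : A u ∈ Filt Vg 2 := by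
        have := Apow_Filt hA2 1 0 u hu'
        simpa using this
      have hB : B (A u) v = 0 := Filt_orth horth (by norm_num : (0:ℤ) < 2 + 0) _ hAu v hv'
      have hp := hA u v
      rw [hB, hu, hv] at hp
      constructor
      · have : Q (u + v) = 0 := by linear_combination hp
        exact this
      · exact add_mem hu' hv'
    · intro j hj u hu
      exact ⟨hQvan j (by omega) u hu, le_Filt hj hu⟩
  intro x hx; exact (main x hx).1


/-- Componentwise nondegeneracy. -/
theorem comp_nondeg (hint : DirectSum.IsInternal Vg) (hnd : B.Nondegenerate)
    (horth : ∀ i j : ℤ, i + j ≠ 0 → ∀ x ∈ Vg i, ∀ y ∈ Vg j, B x y = 0)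
    (p : ℤ) (x : V) (hx : x ∈ Vg p) (h : ∀ y ∈ Vg (-p), B x y = 0) : x = 0 := by
  refine hnd.1 x fun y => ?_
  have hy : y ∈ ⨆ j, Vg j := hint.submodule_iSup_eq_top ▸ Submodule.mem_top
  refine Submodule.iSup_induction Vg (motive := fun y => B x y = 0) hy ?_ (by simp) ?_
  · intro j z hz
    by_cases hj : j = -p
    · exact h z (hj ▸ hz)
    · exact horth p j (by omega) x hx z hz
  · intro u v h1 h2; rw [map_add, h1, h2, add_zero]

theorem comp_disjoint (hint : DirectSum.IsInternal Vg) (hnd : B.Nondegenerate)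
    (horth : ∀ i j : ℤ, i + j ≠ 0 → ∀ x ∈ Vg i, ∀ y ∈ Vg j, B x y = 0)
    (p : ℤ) (x : V) (hx : x ∈ Vg p) (hx' : x ∈ Filt Vg (p + 1)) : x = 0 := by
  refine comp_nondeg hint hnd horth p x hx fun y hy => ?_
  exact Filt_orth horth (by omega : (0:ℤ) < (p+1) + (-p)) x hx' y (le_Filt le_rfl hy)

/-- There is a uniform lower bound below which the filtration is everything. -/
theorem Filt_eq_top [FiniteDimensional k V] (hint : DirectSum.IsInternal Vg) :
    ∃ Mz : ℤ, ∀ i : ℤ, i ≤ Mz → Filt Vg i = ⊤ := by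
  classical
  obtain ⟨s, hs⟩ := Module.Finite.fg_top (R := k) (M := V)
  have hsingle : ∀ x : V, ∃ Mz : ℤ, x ∈ Filt Vg Mz := by
    intro x
    have hx : x ∈ ⨆ j, Vg j := hint.submodule_iSup_eq_top ▸ Submodule.mem_top
    obtain ⟨t, ht⟩ := Submodule.mem_iSup_iff_exists_finset.mp hx
    rcases t.eq_empty_or_nonempty with rfl | hne
    · simp only [Finset.notMem_empty, iSup_false, iSup_bot, Submodule.mem_bot] at ht
      exact ⟨0, ht ▸ zero_mem _⟩
    · refine ⟨t.min' hne, ?_⟩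
      exact (iSup₂_le fun j hj => le_Filt (t.min'_le j hj) :
        (⨆ j ∈ t, Vg j) ≤ Filt Vg (t.min' hne)) ht
  have hfin : ∀ u : Finset V, ∃ Mz : ℤ, ∀ x ∈ u, x ∈ Filt Vg Mz := by
    intro u
    induction u using Finset.induction_on with
    | empty => exact ⟨0, by simp⟩
    | @insert a u ha ih =>
      obtain ⟨M1, h1⟩ := ih
      obtain ⟨M2, h2⟩ := hsingle a
      refine ⟨min M1 M2, fun x hx => ?_⟩
      rcases Finset.mem_insert.mp hx with rfl | hx
      · exact Filt_mono (min_le_right _ _) h2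
      · exact Filt_mono (min_le_left _ _) (h1 x hx)
  obtain ⟨Mz, hMz⟩ := hfin s
  refine ⟨Mz, fun i hi => ?_⟩
  have hle : Submodule.span k (s : Set V) ≤ Filt Vg i :=
    Submodule.span_le.mpr fun x hx => Filt_mono hi (hMz x hx)
  exact le_antisymm le_top (hs ▸ hle)


/-- Characterization of `Filt a` as the `B`-orthogonal of `Filt b` when `a + b = 1`. -/
theorem Filt_orthogonal (hint : DirectSum.IsInternal Vg) (hnd : B.Nondegenerate)
    (horth : ∀ i j : ℤ, i + j ≠ 0 → ∀ x ∈ Vg i, ∀ y ∈ Vg j, B x y = 0)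
    {Mz : ℤ} (hMz : ∀ i : ℤ, i ≤ Mz → Filt Vg i = ⊤)
    {a b : ℤ} (hab : a + b = 1) (x : V) :
    x ∈ Filt Vg a ↔ ∀ y ∈ Filt Vg b, B x y = 0 := by
  constructor
  · intro hx y hy
    exact Filt_orth horth (by omega) x hx y hy
  · intro h
    have hstep : ∀ r : ℤ, r ≤ a - 1 → x ∈ Filt Vg r → x ∈ Filt Vg (r + 1) := by
      intro r hr hx
      obtain ⟨v, hv, y, hy, rfl⟩ := Filt_mem_split hx
      have hv0 : v = 0 := by
        refine comp_nondeg hint hnd horth r v hv fun z hz => ?_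
        have h1 : B (v + y) z = 0 := h z (le_Filt (by omega) hz)
        have h2 : B y z = 0 :=
          Filt_orth horth (by omega : (0:ℤ) < (r + 1) + (-r)) y hy z (le_Filt le_rfl hz)
        rw [map_add, LinearMap.add_apply, h2, add_zero] at h1
        exact h1
      rw [hv0, zero_add]; exact hy
    by_cases hcase : a ≤ Mz
    · exact (hMz _ hcase) ▸ Submodule.mem_top
    · have hbase0 : x ∈ Filt Vg Mz := (hMz Mz le_rfl) ▸ Submodule.mem_top
      have hclimb : ∀ s : ℤ, Mz ≤ s → s ≤ a → x ∈ Filt Vg s := by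
        intro s hs1 hs2
        refine Int.le_induction (m := Mz) (motive := fun s _ => s ≤ a → x ∈ Filt Vg s)
          (fun _ => hbase0) ?_ s hs1 hs2
        intro r _ ih hr2
        exact hstep r (by omega) (ih (by omega))
      exact hclimb a (by omega) le_rfl


/-- Key characterization: the next filtration step is cut out inside the previous one
by conditions expressed purely in terms of `A` and `Q`. -/
theorem Filt_char (hint : DirectSum.IsInternal Vg) (hnd : B.Nondegenerate)
    (horth : ∀ i j : ℤ, i + j ≠ 0 → ∀ x ∈ Vg i, ∀ y ∈ Vg j, B x y = 0)
    (hA2 : ∀ i : ℤ, ∀ x ∈ Vg i, A x ∈ Vg (i + 2))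
    (hQvan : ∀ i : ℤ, i ≠ -1 → ∀ x ∈ Vg i, Q x = 0)
    (hA : ∀ x y : V, Q (x + y) - Q x - Q y = B (A x) y)
    (hadjpow : ∀ (m : ℕ) (x y : V), B ((A ^ m) x) y = B x ((A ^ m) y))
    (hQev : ∀ n : ℕ, Even n → (∀ x ∈ Vg (-(n : ℤ)), (A ^ n) x = 0 → x = 0))
    (hQodd : ∀ n : ℕ, Odd n →
      (∀ x ∈ Vg (-(n : ℤ)), (A ^ ((n - 1) / 2)) x = 0 → x = 0) ∧
      (∀ w ∈ ⇑(A ^ ((n - 1) / 2)) '' (Vg (-(n : ℤ)) : Set V),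
        (∀ w' ∈ ⇑(A ^ ((n - 1) / 2)) '' (Vg (-(n : ℤ)) : Set V),
          QuadraticMap.polar Q w w' = 0) → Q w = 0 → w = 0))
    (n : ℕ) (hn : 1 ≤ n) (x : V) :
    x ∈ Filt Vg (1 - (n : ℤ)) ↔
      x ∈ Filt Vg (-(n : ℤ)) ∧ (A ^ n) x ∈ Filt Vg ((n : ℤ) + 1) ∧
        (Odd n → Q ((A ^ ((n - 1) / 2)) x) = 0) := by
  constructor
  · intro hx
    refine ⟨Filt_mono (by omega) hx, ?_, ?_⟩
    · have := Apow_Filt hA2 n (1 - (n : ℤ)) x hx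
      rwa [show (1 - (n:ℤ) + 2 * n) = (n:ℤ) + 1 by ring] at this
    · rintro ⟨c, hc⟩
      have hm : (n - 1) / 2 = c := by omega
      have hmem := Apow_Filt hA2 ((n - 1) / 2) (1 - (n : ℤ)) x hx
      rw [hm] at hmem ⊢
      rw [show (1 - (n:ℤ) + 2 * (c:ℕ)) = 0 by push_cast; omega] at hmem
      exact Q_Filt_zero horth hA2 hQvan hA _ hmem
  · rintro ⟨hx, hAn, hQx⟩
    obtain ⟨v, hv, y, hy, rfl⟩ := Filt_mem_split hx
    have hy' : y ∈ Filt Vg (1 - (n : ℤ)) := by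
      rwa [show (1 - (n:ℤ)) = -(n:ℤ) + 1 by ring]
    have hAnv : (A ^ n) v ∈ Vg ((n : ℤ)) := by
      have := Apow_Vg hA2 n (-(n:ℤ)) v hv
      rwa [show (-(n:ℤ) + 2 * n) = (n:ℤ) by ring] at this
    have hAny : (A ^ n) y ∈ Filt Vg ((n:ℤ) + 1) := by
      have := Apow_Filt hA2 n (-(n:ℤ) + 1) y hy
      rwa [show (-(n:ℤ) + 1 + 2 * n) = (n:ℤ) + 1 by ring] at this
    have hAnvF : (A ^ n) v ∈ Filt Vg ((n:ℤ) + 1) := by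
      have he : (A ^ n) v = (A ^ n) (v + y) - (A ^ n) y := by
        rw [map_add]; abel
      rw [he]
      exact Submodule.sub_mem _ hAn hAny
    have hAnv0 : (A ^ n) v = 0 := comp_disjoint hint hnd horth (n : ℤ) _ hAnv hAnvF
    have hvzero : v = 0 := by
      rcases Nat.even_or_odd n with he | ho
      · exact hQev n he v hv hAnv0
      · obtain ⟨c, hc⟩ := ho
        have hm : (n - 1) / 2 = c := by omega
        have hq := hQx ⟨c, hc⟩
        rw [hm] at hq
        have hodd2 := hQodd n ⟨c, hc⟩
        rw [hm] at hodd2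
        -- Q (A^c v) = 0
        have hAmy : (A ^ c) y ∈ Filt Vg 0 := by
          have := Apow_Filt hA2 c (-(n:ℤ) + 1) y hy
          rwa [show (-(n:ℤ) + 1 + 2 * (c:ℕ)) = 0 by push_cast; omega] at this
        have hAmv : (A ^ c) v ∈ Vg (-1) := by
          have := Apow_Vg hA2 c (-(n:ℤ)) v hv
          rwa [show (-(n:ℤ) + 2 * (c:ℕ)) = -1 by push_cast; omega] at this
        have hQy : Q ((A ^ c) y) = 0 := Q_Filt_zero horth hA2 hQvan hA _ hAmy
        have hBvy : B (A ((A ^ c) v)) ((A ^ c) y) = 0 := by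
          refine Filt_orth horth (by norm_num : (0:ℤ) < 1 + 0) _ ?_ _ hAmy
          exact le_Filt le_rfl (hA2 (-1) _ hAmv)
        have hQv : Q ((A ^ c) v) = 0 := by
          have hp := hA ((A ^ c) v) ((A ^ c) y)
          rw [hBvy] at hp
          have hsum : Q ((A ^ c) (v + y)) = Q ((A ^ c) v) := by
            rw [map_add]
            linear_combination hp + hQy
          rw [hsum] at hq
          exact hq
        -- the radical argument
        have hw0 : (A ^ c) v = 0 := by
          refine hodd2.2 _ ⟨v, hv, rfl⟩ ?_ hQv
          rintro w' ⟨v', hv', rfl⟩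
          have hpol : QuadraticMap.polar (⇑Q) ((A ^ c) v) ((A ^ c) v') =
              B (A ((A ^ c) v)) ((A ^ c) v') := hA _ _
          rw [hpol, ← hadjpow c (A ((A ^ c) v)) v']
          have hcomp : (A ^ c) (A ((A ^ c) v)) = (A ^ n) v := by
            rw [← Module.End.mul_apply, ← Module.End.mul_apply, ← pow_succ, ← pow_add,
              show c + 1 + c = n by omega]
          rw [hcomp, hAnv0]
          simp
        exact hodd2.1 v hv hw0
    rw [hvzero, zero_add]
    exact hy'


theorem B_symm [CharP k 2] (halt : B.IsAlt) (x y : V) : B x y = B y x := by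
  rw [← halt.neg_eq x y, CharTwo.neg_eq]

theorem B_adj [CharP k 2] (halt : B.IsAlt)
    (hA : ∀ x y : V, Q (x + y) - Q x - Q y = B (A x) y) (x y : V) :
    B (A x) y = B x (A y) := by
  have h1 : B (A x) y = B (A y) x := by
    rw [← hA x y, ← hA y x, add_comm x y]
    ring
  rw [h1, B_symm halt]

theorem B_adj_pow [CharP k 2] (halt : B.IsAlt)
    (hA : ∀ x y : V, Q (x + y) - Q x - Q y = B (A x) y) (m : ℕ) (x y : V) :
    B ((A ^ m) x) y = B x ((A ^ m) y) := by
  induction m generalizing x y with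
  | zero => simp
  | succ m ih =>
    have hcomm : A ((A ^ m) y) = (A ^ m) (A y) := by
      rw [← Module.End.mul_apply, ← pow_mul_comm', Module.End.mul_apply]
    rw [pow_succ, Module.End.mul_apply, Module.End.mul_apply, ih (A x) y, B_adj halt hA, hcomm]

end SFQPF


open SFQPF in
/-- char 2, `(V, B)` symplectic with `s`-good grading, `g ∈ Sp(V)`
a symplectic automorphism, and `Q ∈ Q(V)₂⁰` with `Q ∘ g = Q`.  Then `g`
preserves the filtration: `g(V_{≥ i}) = V_{≥ i}` for all `i`. -/
theorem symplectic_fixing_Q_preserves_filtration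
    (k V : Type*) [Field k] [CharP k 2] [AddCommGroup V] [Module k V]
    [FiniteDimensional k V]
    (B : LinearMap.BilinForm k V) (halt : B.IsAlt) (hnd : B.Nondegenerate)
    (Vg : ℤ → Submodule k V) (hg : SGood k V B Vg)
    (Q : QuadraticForm k V) (A : Module.End k V)
    (hA : ∀ x y : V, Q (x + y) - Q x - Q y = B (A x) y)
    (hQ : QV20 k V Vg Q A)
    (g : V ≃ₗ[k] V)
    (hsymp : ∀ x y : V, B (g x) (g y) = B x y)
    (hfix : ∀ x : V, Q (g x) = Q x) :
    ∀ i : ℤ, Submodule.map g.toLinearMap (⨆ j ≥ i, Vg j) = ⨆ j ≥ i, Vg j := by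
  obtain ⟨hint, hdims, hev, horth⟩ := hg
  obtain ⟨hA2, hQvan, hQevfull, hQodd⟩ := hQ
  have hQev : ∀ n : ℕ, Even n → ∀ x ∈ Vg (-(n:ℤ)), (A ^ n) x = 0 → x = 0 :=
    fun n hn => (hQevfull n hn).1
  have hadjpow := B_adj_pow (Q := Q) halt hA
  obtain ⟨Mz, hMz⟩ := Filt_eq_top (k := k) (V := V) (Vg := Vg) hint
  -- `g` commutes with `A`
  have hAg : ∀ x : V, A (g x) = g (A x) := by
    intro x
    have key : ∀ y : V, B (A (g x)) y = B (g (A x)) y := by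
      intro y
      calc B (A (g x)) y = B (A (g x)) (g (g.symm y)) := by rw [g.apply_symm_apply]
        _ = Q (g x + g (g.symm y)) - Q (g x) - Q (g (g.symm y)) := (hA _ _).symm
        _ = Q (x + g.symm y) - Q x - Q (g.symm y) := by rw [← map_add g, hfix, hfix, hfix]
        _ = B (A x) (g.symm y) := hA _ _
        _ = B (g (A x)) (g (g.symm y)) := (hsymp _ _).symm
        _ = B (g (A x)) y := by rw [g.apply_symm_apply]
    have hz : A (g x) - g (A x) = 0 := by
      refine hnd.1 _ fun y => ?_
      rw [map_sub, LinearMap.sub_apply, key y, sub_self]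
    exact sub_eq_zero.mp hz
  have hAgpow : ∀ (m : ℕ) (x : V), (A ^ m) (g x) = g ((A ^ m) x) := by
    intro m
    induction m with
    | zero => intro x; simp
    | succ m ih =>
      intro x
      rw [pow_succ, Module.End.mul_apply, Module.End.mul_apply, hAg x, ih (A x)]
  have hsymp' : ∀ x y : V, B (g.symm x) (g.symm y) = B x y := by
    intro x y
    rw [← hsymp (g.symm x) (g.symm y), g.apply_symm_apply, g.apply_symm_apply]
  have hfix' : ∀ x : V, Q (g.symm x) = Q x := by
    intro x
    rw [← hfix (g.symm x), g.apply_symm_apply]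
  have hAg' : ∀ x : V, A (g.symm x) = g.symm (A x) := by
    intro x
    apply g.injective
    rw [← hAg (g.symm x), g.apply_symm_apply, g.apply_symm_apply]
  have hAgpow' : ∀ (m : ℕ) (x : V), (A ^ m) (g.symm x) = g.symm ((A ^ m) x) := by
    intro m
    induction m with
    | zero => intro x; simp
    | succ m ih =>
      intro x
      rw [pow_succ, Module.End.mul_apply, Module.End.mul_apply, hAg' x, ih (A x)]
  -- a submodule stable under `g` and `g.symm` is preserved
  have hmapeq : ∀ (U : Submodule k V), (∀ x ∈ U, g x ∈ U) → (∀ x ∈ U, g.symm x ∈ U) →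
      Submodule.map g.toLinearMap U = U := by
    intro U h1 h2
    apply le_antisymm
    · rintro _ ⟨x, hx, rfl⟩
      exact h1 x hx
    · intro x hx
      exact ⟨g.symm x, h2 x hx, g.apply_symm_apply x⟩
  -- stability of the orthogonal complement
  have hFstab : ∀ (a b : ℤ), a + b = 1 → ∀ (e : V ≃ₗ[k] V), (∀ u w, B (e u) (e w) = B u w) →
      (∀ y ∈ Filt Vg b, e.symm y ∈ Filt Vg b) → ∀ x ∈ Filt Vg a, e x ∈ Filt Vg a := by
    intro a b hab e he hesym x hx
    refine (Filt_orthogonal hint hnd horth hMz hab (e x)).mpr ?_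
    intro y hy
    have h1 := (Filt_orthogonal hint hnd horth hMz hab x).mp hx
    have hxy : B (e x) y = B x (e.symm y) := by
      calc B (e x) y = B (e x) (e (e.symm y)) := by rw [e.apply_symm_apply]
        _ = B x (e.symm y) := he x (e.symm y)
    rw [hxy]
    exact h1 _ (hesym y hy)
  have hchar' := Filt_char (B := B) hint hnd horth hA2 hQvan hA hadjpow hQev hQodd
  -- the inductive step of the climb
  have hestep : ∀ n : ℕ,
      Submodule.map g.toLinearMap (Filt Vg (-(n:ℤ) - 1)) = Filt Vg (-(n:ℤ) - 1) →
      Submodule.map g.toLinearMap (Filt Vg (-(n:ℤ))) = Filt Vg (-(n:ℤ)) := by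
    intro n hprev
    have hgF : ∀ y ∈ Filt Vg (-(n:ℤ) - 1), g y ∈ Filt Vg (-(n:ℤ) - 1) := by
      intro y hy
      rw [← hprev]
      exact Submodule.mem_map_of_mem hy
    have hgF' : ∀ y ∈ Filt Vg (-(n:ℤ) - 1), g.symm y ∈ Filt Vg (-(n:ℤ) - 1) := by
      intro y hy
      rw [← hprev] at hy
      obtain ⟨z, hz, hzz⟩ := hy
      have hzy : g.symm y = z := by rw [← hzz]; exact g.symm_apply_apply z
      rwa [hzy]
    have hc := hchar' (n + 1) (by omega)
    have e1 : 1 - ((n + 1 : ℕ) : ℤ) = -(n:ℤ) := by push_cast; ring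
    have e2 : -((n + 1 : ℕ) : ℤ) = -(n:ℤ) - 1 := by push_cast; ring
    have e3 : ((n + 1 : ℕ) : ℤ) + 1 = (n:ℤ) + 2 := by push_cast; ring
    rw [e1, e2, e3] at hc
    have hmain : ∀ (e : V ≃ₗ[k] V), (∀ u w, B (e u) (e w) = B u w) →
        (∀ z, Q (e z) = Q z) → (∀ (m : ℕ) (z : V), (A ^ m) (e z) = e ((A ^ m) z)) →
        (∀ y ∈ Filt Vg (-(n:ℤ) - 1), e y ∈ Filt Vg (-(n:ℤ) - 1)) →
        (∀ y ∈ Filt Vg (-(n:ℤ) - 1), e.symm y ∈ Filt Vg (-(n:ℤ) - 1)) →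
        ∀ x ∈ Filt Vg (-(n:ℤ)), e x ∈ Filt Vg (-(n:ℤ)) := by
      intro e he heQ heA heF heF' x hx
      obtain ⟨h1, h2, h3⟩ := (hc x).mp hx
      refine (hc (e x)).mpr ⟨heF x h1, ?_, ?_⟩
      · rw [heA (n + 1) x]
        exact hFstab ((n:ℤ)+2) (-(n:ℤ)-1) (by ring) e he heF' _ h2
      · intro hodd
        rw [heA _ x, heQ]
        exact h3 hodd
    exact hmapeq _
      (hmain g hsymp hfix hAgpow hgF hgF')
      (hmain g.symm hsymp' hfix' hAgpow' hgF' (fun y hy => by simpa using hgF y hy))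
  -- the climb itself
  have hS : ∀ n : ℕ,
      Submodule.map g.toLinearMap (Filt Vg (-(n:ℤ))) = Filt Vg (-(n:ℤ)) := by
    have key : ∀ (d n : ℕ), -(n:ℤ) - d ≤ Mz →
        Submodule.map g.toLinearMap (Filt Vg (-(n:ℤ))) = Filt Vg (-(n:ℤ)) := by
      intro d
      induction d with
      | zero =>
        intro n hn
        rw [hMz (-(n:ℤ)) (by omega), Submodule.map_top]
        exact LinearEquiv.range g
      | succ d ih =>
        intro n hn
        by_cases hcase : -(n:ℤ) - d ≤ Mz
        · exact ih n hcase
        · have hnext := ih (n + 1) (by push_cast; push_cast at hn; omega)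
          have e2 : -((n + 1 : ℕ) : ℤ) = -(n:ℤ) - 1 := by push_cast; ring
          rw [e2] at hnext
          exact hestep n hnext
    intro n
    refine key (-(n:ℤ) - Mz).toNat n ?_
    have := Int.self_le_toNat (-(n:ℤ) - Mz)
    omega
  intro i
  show Submodule.map g.toLinearMap (Filt Vg i) = Filt Vg i
  rcases le_or_gt i 0 with hi | hi
  · have h := hS ((-i).toNat)
    rwa [show -(((-i).toNat : ℕ) : ℤ) = i by omega] at h
  · have hSn := hS ((i - 1).toNat)
    have ha : -(((i - 1).toNat : ℕ) : ℤ) = -(i - 1) := by omega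
    rw [ha] at hSn
    have hgFneg : ∀ y ∈ Filt Vg (-(i-1)), g y ∈ Filt Vg (-(i-1)) := by
      intro y hy
      rw [← hSn]
      exact Submodule.mem_map_of_mem hy
    have hgFneg' : ∀ y ∈ Filt Vg (-(i-1)), g.symm y ∈ Filt Vg (-(i-1)) := by
      intro y hy
      rw [← hSn] at hy
      obtain ⟨z, hz, hzz⟩ := hy
      have hzy : g.symm y = z := by rw [← hzz]; exact g.symm_apply_apply z
      rwa [hzy]
    refine hmapeq _ ?_ ?_
    · exact hFstab i (-(i-1)) (by ring) g hsymp hgFneg'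
    · exact hFstab i (-(i-1)) (by ring) g.symm hsymp' (fun y hy => by simpa using hgFneg y hy)
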